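/- Fix a seed set S ⊆ V and an integer θ ≥ 1. Let (v_1, g_1), …, (v_θ, g_θ) be independent samples, each with v_i uniform on V and g_i an independent live-edge sample, and set R_i = RR(v_i, g_i). Then the expectation of (n/θ) · Λ_{𝓡}(S), where Λ_{𝓡}(S) = |{i ∈ {1,…,θ} : R_i ∩ S ≠ ∅}|, equals σ_E(S); i.e., (n/θ) · Λ_{𝓡}(S) is an unbiased estimator of the expected spread of S. -/

import Mathlib

open scoped Classical

noncomputable section

/-- The set of nodes reachable from some node of `S` via edges of `g`
(every node reaches itself). -/
def Reach {V : Type*} (S : Finset V) (g : Finset (V × V)) : Set V :=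
  {x | ∃ s ∈ S, Relation.ReflTransGen (fun a b => (a, b) ∈ g) s x}

/-- Probability of the live-edge graph `g ⊆ F`. -/
def liveProb {V : Type*} [DecidableEq V] (F : Finset (V × V)) (p : V × V → ℝ)
    (g : Finset (V × V)) : ℝ :=
  (∏ e ∈ g, p e) * ∏ e ∈ F \ g, (1 - p e)

/-- The expected spread of the seed set `S`. -/
def expSpread {V : Type*} [DecidableEq V] (F : Finset (V × V)) (p : V × V → ℝ)
    (S : Finset V) : ℝ :=
  ∑ g ∈ F.powerset, liveProb F p g * ((Reach S g).ncard : ℝ)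

/-- The reverse reachable set of `v` in `g`. -/
def RR {V : Type*} (v : V) (g : Finset (V × V)) : Set V :=
  {u | v ∈ Reach {u} g}

/-- Unbiasedness of the RR-set estimator: for `θ ≥ 1` i.i.d. random RR sets
`R_i = RR(v_i, g_i)` (with `v_i` uniform on `V` and `g_i` an independent live-edge sample),
the expectation of `(n/θ) · Λ_𝓡(S)`, where `Λ_𝓡(S) = |{i : R_i ∩ S ≠ ∅}|`,
equals the expected spread `σ_E(S)`. -/
lemma liveProb_total {V : Type*} [DecidableEq V] (F : Finset (V × V)) (p : V × V → ℝ) :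
    ∑ g ∈ F.powerset, liveProb F p g = 1 := by
  simp only [liveProb]
  rw [← Finset.prod_add]
  simp

lemma rr_iff {V : Type*} (v : V) (g : Finset (V × V)) (S : Finset V) :
    (RR v g ∩ (S : Set V)).Nonempty ↔ v ∈ Reach S g := by
  constructor
  · rintro ⟨u, hu, huS⟩
    obtain ⟨s, hs, h⟩ := hu
    simp only [Finset.mem_singleton] at hs
    subst hs
    exact ⟨s, by simpa using huS, h⟩
  · rintro ⟨s, hs, h⟩
    exact ⟨s, ⟨s, by simp, h⟩, by simpa using hs⟩

lemma sum_ind_reach {V : Type*} [Fintype V] [DecidableEq V] (g : Finset (V × V)) (S : Finset V) :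
    ∑ v : V, (if v ∈ Reach S g then (1:ℝ) else 0) = ((Reach S g).ncard : ℝ) := by
  rw [Finset.sum_boole, Set.ncard_eq_toFinset_card']
  congr 1
  simp [Set.toFinset_setOf]

theorem rr_estimator_unbiased {V : Type*} [Fintype V] [DecidableEq V]
    (E : Finset (V × V)) (p : V × V → ℝ)
    (hp : ∀ e, 0 ≤ p e ∧ p e ≤ 1)
    (S : Finset V) (θ : ℕ) (hθ : 1 ≤ θ) :
    (∑ vs : Fin θ → V, ∑ gs ∈ Fintype.piFinset (fun _ : Fin θ => E.powerset),
        (∏ i, (1 / (Fintype.card V : ℝ)) * liveProb E p (gs i)) *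
          (((Fintype.card V : ℝ) / (θ : ℝ)) *
            ((Finset.univ.filter
                (fun i : Fin θ => (RR (vs i) (gs i) ∩ (S : Set V)).Nonempty)).card : ℝ)))
      = expSpread E p S := by
  rcases isEmpty_or_nonempty V with hV | hV
  · haveI : Nonempty (Fin θ) := ⟨⟨0, hθ⟩⟩
    haveI : IsEmpty (Fin θ → V) := by infer_instance
    rw [Finset.univ_eq_empty, Finset.sum_empty, expSpread]
    have hR : ∀ g : Finset (V × V), (Reach S g).ncard = 0 := fun g => by
      simp [Set.eq_empty_of_isEmpty (Reach S g)]
    simp [hR]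
  · set n : ℝ := (Fintype.card V : ℝ) with hn
    have hn0 : n ≠ 0 := Nat.cast_ne_zero.mpr Fintype.card_ne_zero
    have hθ0 : (θ : ℝ) ≠ 0 := Nat.cast_ne_zero.mpr (by omega)
    -- the per-sample factor, with the indicator absorbed into coordinate i
    set F : Fin θ → Fin θ → V → Finset (V × V) → ℝ :=
      fun i j v g => (1 / n) * liveProb E p g *
        (if j = i then (if v ∈ Reach S g then (1:ℝ) else 0) else 1) with hF
    have key : ∀ (vs : Fin θ → V) (gs : Fin θ → Finset (V × V)),
        (∏ j, (1 / n) * liveProb E p (gs j)) *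
          ((n / (θ : ℝ)) *
            ((Finset.univ.filter
                (fun i : Fin θ => (RR (vs i) (gs i) ∩ (S : Set V)).Nonempty)).card : ℝ))
        = ∑ i : Fin θ, (n / (θ : ℝ)) * ∏ j, F i j (vs j) (gs j) := by
      intro vs gs
      have hc : ((Finset.univ.filter
            (fun i : Fin θ => (RR (vs i) (gs i) ∩ (S : Set V)).Nonempty)).card : ℝ)
          = ∑ i : Fin θ, (if vs i ∈ Reach S (gs i) then (1:ℝ) else 0) := by
        rw [Finset.card_filter]
        push_cast
        exact Finset.sum_congr rfl (fun i _ => by simp [rr_iff])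
      rw [hc, Finset.mul_sum, Finset.mul_sum]
      refine Finset.sum_congr rfl (fun i _ => ?_)
      simp only [hF, Finset.prod_mul_distrib]
      rw [Finset.prod_ite_eq' Finset.univ i
        (fun j => (if vs j ∈ Reach S (gs j) then (1:ℝ) else 0))]
      simp only [Finset.mem_univ, if_pos]
      ring
    calc (∑ vs : Fin θ → V, ∑ gs ∈ Fintype.piFinset (fun _ : Fin θ => E.powerset),
            (∏ i, (1 / n) * liveProb E p (gs i)) *
              ((n / (θ : ℝ)) *
                ((Finset.univ.filter
                    (fun i : Fin θ => (RR (vs i) (gs i) ∩ (S : Set V)).Nonempty)).card : ℝ)))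
        = ∑ vs : Fin θ → V, ∑ gs ∈ Fintype.piFinset (fun _ : Fin θ => E.powerset),
            ∑ i : Fin θ, (n / (θ : ℝ)) * ∏ j, F i j (vs j) (gs j) := by
          exact Finset.sum_congr rfl (fun vs _ => Finset.sum_congr rfl (fun gs _ => key vs gs))
      _ = ∑ i : Fin θ, ∑ vs : Fin θ → V,
            ∑ gs ∈ Fintype.piFinset (fun _ : Fin θ => E.powerset),
              (n / (θ : ℝ)) * ∏ j, F i j (vs j) (gs j) := by
          have swap1 : (∑ vs : Fin θ → V,
                ∑ gs ∈ Fintype.piFinset (fun _ : Fin θ => E.powerset),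
                  ∑ i : Fin θ, (n / (θ : ℝ)) * ∏ j, F i j (vs j) (gs j))
              = ∑ vs : Fin θ → V, ∑ i : Fin θ,
                  ∑ gs ∈ Fintype.piFinset (fun _ : Fin θ => E.powerset),
                    (n / (θ : ℝ)) * ∏ j, F i j (vs j) (gs j) :=
            Finset.sum_congr rfl fun vs _ => Finset.sum_comm
          rw [swap1, Finset.sum_comm]
      _ = ∑ i : Fin θ, (n / (θ : ℝ)) * ∑ vs : Fin θ → V,
            ∑ gs ∈ Fintype.piFinset (fun _ : Fin θ => E.powerset),
              ∏ j, F i j (vs j) (gs j) := by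
          simp [Finset.mul_sum]
      _ = ∑ _i : Fin θ, (n / (θ : ℝ)) * ((1 / n) * expSpread E p S) := by
          refine Finset.sum_congr rfl (fun i _ => ?_)
          congr 1
          have h1 : ∀ vs : Fin θ → V,
              (∑ gs ∈ Fintype.piFinset (fun _ : Fin θ => E.powerset),
                ∏ j, F i j (vs j) (gs j))
              = ∏ j, ∑ g ∈ E.powerset, F i j (vs j) g := fun vs =>
            Finset.sum_prod_piFinset _ _
          simp_rw [h1]
          rw [← Fintype.piFinset_univ]
          rw [Finset.sum_prod_piFinset (Finset.univ : Finset V)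
            (fun j v => ∑ g ∈ E.powerset, F i j v g)]
          have hfac : ∀ j : Fin θ,
              (∑ v : V, ∑ g ∈ E.powerset, F i j v g)
              = if j = i then (1 / n) * expSpread E p S else 1 := by
            intro j
            by_cases hj : j = i
            · subst hj
              have hFe : ∀ (v : V) (g : Finset (V × V)), F j j v g
                  = (1 / n) * (liveProb E p g * (if v ∈ Reach S g then (1:ℝ) else 0)) := by
                intro v g
                simp only [hF, eq_self_iff_true, if_true]
                ring
              simp_rw [hFe]
              rw [Finset.sum_comm, expSpread, Finset.mul_sum]
              refine Finset.sum_congr rfl (fun g hg => ?_)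
              rw [← Finset.mul_sum, ← Finset.mul_sum, sum_ind_reach]
            · simp only [hF, if_neg hj, mul_one]
              simp only [← Finset.mul_sum, liveProb_total, mul_one]
              rw [Finset.sum_const, Finset.card_univ, nsmul_eq_mul]
              field_simp
              exact hn.symm
          simp_rw [hfac]
          rw [Finset.prod_ite_eq' Finset.univ i
            (fun _ => (1 / n) * expSpread E p S)]
          simp
      _ = expSpread E p S := by
          rw [Finset.sum_const, Finset.card_univ, Fintype.card_fin, nsmul_eq_mul]
          field_simp
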